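/- Let Ω ⊂ ℂ^N be a bounded open set and π : Ω → ℂ a map that is holomorphic on Ω, Lipschitz on Ω, and satisfies π(Ω) ⊆ Δ. Let Φ : Δ → Ω be holomorphic with π(Φ(ζ)) = ζ for all ζ ∈ Δ, and let Φ̃ : Δ → Ω be holomorphic. Suppose (z_k) is a sequence in Δ converging to 1 nontangentially such that Φ̃(z_k) = Φ(z_k) + o(|z_k - 1|³) as k → ∞ (i.e. (Φ̃(z_k) - Φ(z_k))/|z_k - 1|³ → 0). Then π(Φ̃(ζ)) = ζ for all ζ ∈ Δ. -/

import Mathlib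

open Metric Filter

set_option maxHeartbeats 1600000

noncomputable def Complex.abs : AbsoluteValue ℂ ℝ := NormedField.toAbsoluteValue ℂ

lemma Complex.abs_apply (z : ℂ) : Complex.abs z = ‖z‖ := rfl

lemma Complex.sq_abs (z : ℂ) : Complex.abs z ^ 2 = Complex.normSq z := Complex.sq_norm z

lemma Complex.abs_conj (z : ℂ) : Complex.abs ((starRingEnd ℂ) z) = Complex.abs z :=
  Complex.norm_conj z

lemma Complex.norm_eq_abs (z : ℂ) : ‖z‖ = Complex.abs z := rfl

lemma Complex.abs_ofReal (r : ℝ) : Complex.abs (r : ℂ) = |r| := Complex.norm_real r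

lemma Complex.continuous_abs : Continuous Complex.abs := continuous_norm

lemma Complex.re_le_abs (z : ℂ) : z.re ≤ Complex.abs z := Complex.re_le_norm z

lemma Complex.normSq_eq_abs (z : ℂ) : Complex.normSq z = Complex.abs z ^ 2 :=
  Complex.normSq_eq_norm_sq z

lemma Complex.abs_le_abs_of_mapsTo_ball_self {f : ℂ → ℂ} {R : ℝ} {z : ℂ}
    (hd : DifferentiableOn ℂ f (ball 0 R)) (h_maps : Set.MapsTo f (ball 0 R) (ball 0 R))
    (h₀ : f 0 = 0) (hz : Complex.abs z < R) : Complex.abs (f z) ≤ Complex.abs z :=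
  Complex.norm_le_norm_of_mapsTo_ball hd (h_maps.mono_right ball_subset_closedBall) h₀ hz

lemma Complex.abs_dist_eq (z w : ℂ) : dist z w = Complex.abs (z - w) := Complex.dist_eq z w

namespace BKProof

open Complex

open Complex

noncomputable def mob (a z : ℂ) : ℂ := (z - a) / (1 - (starRingEnd ℂ) a * z)

lemma mob_key (a z : ℂ) : normSq (1 - (starRingEnd ℂ) a * z) - normSq (z - a)
    = (1 - normSq a) * (1 - normSq z) := by
  simp only [normSq_apply, sub_re, sub_im, mul_re, mul_im, one_re, one_im, conj_re, conj_im]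
  ring

lemma quad_key (x : ℂ) : normSq (x + 1) - normSq (x - 1) = 4 * x.re := by
  simp only [normSq_apply, add_re, add_im, sub_re, sub_im, one_re, one_im]; ring

lemma normSq_lt_one {a : ℂ} (h : Complex.abs a < 1) : normSq a < 1 := by
  rw [← Complex.sq_abs]; nlinarith [Complex.abs.nonneg a]

lemma abs_lt_one_of_normSq {a : ℂ} (h : normSq a < 1) : Complex.abs a < 1 := by
  nlinarith [Complex.abs.nonneg a, Complex.sq_abs a]

lemma mem_ball_iff_abs {z : ℂ} : z ∈ ball (0:ℂ) 1 ↔ Complex.abs z < 1 := by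
  simp [Complex.abs_apply]

lemma mob_den_ne {a z : ℂ} (ha : Complex.abs a < 1) (hz : Complex.abs z < 1) :
    1 - (starRingEnd ℂ) a * z ≠ 0 := by
  intro h
  have h1 : (1 : ℂ) = (starRingEnd ℂ) a * z := sub_eq_zero.mp h
  have h2 : Complex.abs ((starRingEnd ℂ) a * z) = 1 := by rw [← h1]; simp
  rw [map_mul, Complex.abs_conj] at h2
  nlinarith [Complex.abs.nonneg a, Complex.abs.nonneg z]

lemma self_den_ne {a : ℂ} (ha : Complex.abs a < 1) : (1:ℂ) - a * (starRingEnd ℂ) a ≠ 0 := by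
  rw [Complex.mul_conj]
  intro h
  have := sub_eq_zero.mp h
  have h2 : normSq a = 1 := by exact_mod_cast this.symm
  nlinarith [normSq_lt_one ha]

lemma one_sub_ne {w : ℂ} (hw : Complex.abs w < 1) : (1:ℂ) - w ≠ 0 := by
  intro h
  have : (1:ℂ) = w := sub_eq_zero.mp h
  rw [← this] at hw; simp at hw

lemma mob_maps {a z : ℂ} (ha : Complex.abs a < 1) (hz : Complex.abs z < 1) :
    Complex.abs (mob a z) < 1 := by
  apply abs_lt_one_of_normSq
  rw [show mob a z = (z - a) / (1 - (starRingEnd ℂ) a * z) from rfl, map_div₀ normSq]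
  have hd : 0 < normSq (1 - (starRingEnd ℂ) a * z) := normSq_pos.mpr (mob_den_ne ha hz)
  rw [div_lt_one hd]
  have := mob_key a z
  nlinarith [normSq_lt_one ha, normSq_lt_one hz, normSq_nonneg a, normSq_nonneg z]

lemma mob_mob {a z : ℂ} (ha : Complex.abs a < 1) (hz : Complex.abs z < 1) :
    mob (-a) (mob a z) = z := by
  have h1 : 1 - (starRingEnd ℂ) a * z ≠ 0 := mob_den_ne ha hz
  have h2 : (1:ℂ) - a * (starRingEnd ℂ) a ≠ 0 := self_den_ne ha
  unfold mob
  rw [map_neg]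
  rw [show (z - a) / (1 - (starRingEnd ℂ) a * z) - -a
      = z * (1 - a * (starRingEnd ℂ) a) / (1 - (starRingEnd ℂ) a * z) from by
      rw [eq_div_iff h1, sub_mul, div_mul_cancel₀ _ h1]; ring,
    show 1 - -(starRingEnd ℂ) a * ((z - a) / (1 - (starRingEnd ℂ) a * z))
      = (1 - a * (starRingEnd ℂ) a) / (1 - (starRingEnd ℂ) a * z) from by
      rw [eq_div_iff h1, sub_mul, neg_mul, neg_mul, mul_assoc, div_mul_cancel₀ _ h1]; ring,
    div_div_div_cancel_right₀ h1, mul_div_assoc, div_self h2, mul_one]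

lemma mob_diff {a : ℂ} (ha : Complex.abs a < 1) :
    DifferentiableOn ℂ (mob a) (ball (0:ℂ) 1) := by
  apply DifferentiableOn.div
  · exact (differentiable_id.sub_const a).differentiableOn
  · exact ((differentiable_const _).sub
      ((differentiable_const _).mul differentiable_id)).differentiableOn
  · exact fun z hz => mob_den_ne ha (mem_ball_iff_abs.mp hz)

lemma schwarz_pick {f : ℂ → ℂ} (hd : DifferentiableOn ℂ f (ball (0:ℂ) 1))
    (hm : Set.MapsTo f (ball (0:ℂ) 1) (ball (0:ℂ) 1))
    {u v : ℂ} (hu : u ∈ ball (0:ℂ) 1) (hv : v ∈ ball (0:ℂ) 1) :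
    Complex.abs (mob (f v) (f u)) ≤ Complex.abs (mob v u) := by
  rw [mem_ball_iff_abs] at hu hv
  have hfv : Complex.abs (f v) < 1 := mem_ball_iff_abs.mp (hm (mem_ball_iff_abs.mpr hv))
  have hmv : Complex.abs (-v) < 1 := by simpa using hv
  have hmob_neg_maps : Set.MapsTo (mob (-v)) (ball (0:ℂ) 1) (ball (0:ℂ) 1) := fun w hw =>
    mem_ball_iff_abs.mpr (mob_maps hmv (mem_ball_iff_abs.mp hw))
  have hgd : DifferentiableOn ℂ (fun w => mob (f v) (f (mob (-v) w))) (ball (0:ℂ) 1) :=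
    ((mob_diff hfv).comp hd hm).comp (mob_diff hmv) hmob_neg_maps
  have hgm : Set.MapsTo (fun w => mob (f v) (f (mob (-v) w))) (ball (0:ℂ) 1) (ball (0:ℂ) 1) :=
    fun w hw => mem_ball_iff_abs.mpr (mob_maps hfv (mem_ball_iff_abs.mp (hm (hmob_neg_maps hw))))
  have hg0 : (fun w => mob (f v) (f (mob (-v) w))) 0 = 0 := by
    have h0 : mob (-v) 0 = v := by unfold mob; simp
    simp only [h0]
    unfold mob; simp
  have hmvu : Complex.abs (mob v u) < 1 := mob_maps hv hu
  have := Complex.abs_le_abs_of_mapsTo_ball_self hgd hgm hg0 (z := mob v u) (by simpa using hmvu)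
  have h2 : Complex.abs (mob (f v) (f (mob (-v) (mob v u)))) ≤ Complex.abs (mob v u) := this
  rwa [mob_mob hv hu] at h2

lemma schwarz_pick_normSq {f : ℂ → ℂ} (hd : DifferentiableOn ℂ f (ball (0:ℂ) 1))
    (hm : Set.MapsTo f (ball (0:ℂ) 1) (ball (0:ℂ) 1))
    {u v : ℂ} (hu : u ∈ ball (0:ℂ) 1) (hv : v ∈ ball (0:ℂ) 1) :
    normSq (1 - (starRingEnd ℂ) (f v) * f u) * ((1 - normSq u) * (1 - normSq v)) ≤
      normSq (1 - (starRingEnd ℂ) v * u) * ((1 - normSq (f u)) * (1 - normSq (f v))) := by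
  have hu' := mem_ball_iff_abs.mp hu
  have hv' := mem_ball_iff_abs.mp hv
  have hfu' := mem_ball_iff_abs.mp (hm hu)
  have hfv' := mem_ball_iff_abs.mp (hm hv)
  have hsp := schwarz_pick hd hm hu hv
  have hB : 0 < normSq (1 - (starRingEnd ℂ) (f v) * f u) := normSq_pos.mpr (mob_den_ne hfv' hfu')
  have hb : 0 < normSq (1 - (starRingEnd ℂ) v * u) := normSq_pos.mpr (mob_den_ne hv' hu')
  have hsq : normSq (f u - f v) * normSq (1 - (starRingEnd ℂ) v * u) ≤
      normSq (u - v) * normSq (1 - (starRingEnd ℂ) (f v) * f u) := by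
    have h1 : normSq (mob (f v) (f u)) ≤ normSq (mob v u) := by
      rw [normSq_eq_abs, normSq_eq_abs]
      have := Complex.abs.nonneg (mob (f v) (f u))
      nlinarith [hsp]
    rw [show mob (f v) (f u) = (f u - f v) / (1 - (starRingEnd ℂ) (f v) * f u) from rfl,
      show mob v u = (u - v) / (1 - (starRingEnd ℂ) v * u) from rfl,
      map_div₀ normSq, map_div₀ normSq] at h1
    rw [div_le_div_iff₀ hB hb] at h1
    linarith
  have k1 := mob_key (f v) (f u)
  have k2 := mob_key v u
  nlinarith [hsq, hB.le, hb.le, normSq_nonneg (f u - f v), normSq_nonneg (u - v)]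

lemma julia {f : ℂ → ℂ} (hd : DifferentiableOn ℂ f (ball (0:ℂ) 1))
    (hm : Set.MapsTo f (ball (0:ℂ) 1) (ball (0:ℂ) 1))
    (z : ℕ → ℂ) (hz : ∀ k, z k ∈ ball (0:ℂ) 1)
    (hz1 : Tendsto z atTop (nhds 1))
    (hf1 : Tendsto (fun k => f (z k)) atTop (nhds 1))
    {α : ℝ}
    (hα : Tendsto (fun k => (1 - normSq (f (z k))) / (1 - normSq (z k))) atTop (nhds α))
    {w : ℂ} (hw : w ∈ ball (0:ℂ) 1) :
    normSq (1 - f w) * (1 - normSq w) ≤ α * (normSq (1 - w) * (1 - normSq (f w))) := by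
  have key : ∀ k, normSq (1 - (starRingEnd ℂ) (f (z k)) * f w) * (1 - normSq w) ≤
      normSq (1 - (starRingEnd ℂ) (z k) * w) * (1 - normSq (f w)) *
        ((1 - normSq (f (z k))) / (1 - normSq (z k))) := by
    intro k
    have hzk := hz k
    have hpos : 0 < 1 - normSq (z k) := by
      have := normSq_lt_one (mem_ball_iff_abs.mp hzk); linarith
    have h := schwarz_pick_normSq hd hm hw hzk
    rw [mul_comm (normSq (1 - (starRingEnd ℂ) (z k) * w) * (1 - normSq (f w)))]
    rw [div_mul_eq_mul_div, le_div_iff₀ hpos]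
    nlinarith [h]
  have hnsf : Tendsto (fun k => normSq (1 - (starRingEnd ℂ) (f (z k)) * f w) * (1 - normSq w))
      atTop (nhds (normSq (1 - f w) * (1 - normSq w))) := by
    have h1 : Tendsto (fun k => (starRingEnd ℂ) (f (z k))) atTop (nhds 1) := by
      have := (Complex.continuous_conj.tendsto 1).comp hf1
      simpa [Function.comp_def] using this
    have h2 : Tendsto (fun k => 1 - (starRingEnd ℂ) (f (z k)) * f w) atTop (nhds (1 - f w)) := by
      have := Tendsto.const_sub (1:ℂ) (h1.mul (tendsto_const_nhds (x := f w)))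
      simpa using this
    exact ((Complex.continuous_normSq.tendsto _).comp h2).mul_const _
  have hnsr : Tendsto (fun k => normSq (1 - (starRingEnd ℂ) (z k) * w) * (1 - normSq (f w)) *
      ((1 - normSq (f (z k))) / (1 - normSq (z k)))) atTop
      (nhds (normSq (1 - w) * (1 - normSq (f w)) * α)) := by
    have h1 : Tendsto (fun k => (starRingEnd ℂ) (z k)) atTop (nhds 1) := by
      have := (Complex.continuous_conj.tendsto 1).comp hz1
      simpa [Function.comp_def] using this
    have h2 : Tendsto (fun k => 1 - (starRingEnd ℂ) (z k) * w) atTop (nhds (1 - w)) := by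
      have := Tendsto.const_sub (1:ℂ) (h1.mul (tendsto_const_nhds (x := w)))
      simpa using this
    exact ((((Complex.continuous_normSq.tendsto _).comp h2).mul_const _).mul hα)
  have := le_of_tendsto_of_tendsto' hnsf hnsr key
  linarith [this]

lemma re_quot {a : ℂ} (h : Complex.abs a < 1) :
    ((1+a)/(1-a)).re = (1 - normSq a)/normSq (1-a) := by
  have h1 : (1 - a) ≠ 0 := one_sub_ne h
  have h2 : normSq (1 - a) ≠ 0 := (normSq_pos.mpr h1).ne'
  rw [Complex.div_re, ← add_div]
  congr 1
  simp only [normSq_apply, add_re, add_im, sub_re, sub_im, one_re, one_im]; ring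


lemma burns_krantz {f : ℂ → ℂ} (hd : DifferentiableOn ℂ f (ball (0:ℂ) 1))
    (hm : Set.MapsTo f (ball (0:ℂ) 1) (ball (0:ℂ) 1))
    (z : ℕ → ℂ) (hz : ∀ k, z k ∈ ball (0:ℂ) 1)
    (hlim : Tendsto z atTop (nhds 1))
    {C : ℝ} (hC : 0 < C) (hnt : ∀ k, Complex.abs (1 - z k) ≤ C * (1 - Complex.abs (z k)))
    (ε : ℕ → ℝ) (hεnn : ∀ k, 0 ≤ ε k) (hε : Tendsto ε atTop (nhds 0))
    (hbd : ∀ k, Complex.abs (f (z k) - z k) ≤ ε k * Complex.abs (1 - z k) ^ 3) :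
    ∀ w ∈ ball (0:ℂ) 1, f w = w := by
  -- abbreviations
  set A : ℕ → ℝ := fun k => Complex.abs (1 - z k) with hA
  have habs : ∀ k, Complex.abs (z k) < 1 := fun k => mem_ball_iff_abs.mp (hz k)
  have habsnn : ∀ k, 0 ≤ Complex.abs (z k) := fun k => Complex.abs.nonneg _
  have hAnn : ∀ k, 0 ≤ A k := fun k => Complex.abs.nonneg _
  have hδA : ∀ k, 1 - Complex.abs (z k) ≤ A k := by
    intro k
    have := norm_sub_norm_le (1:ℂ) (z k)
    simpa [Complex.norm_eq_abs] using this
  have hApos : ∀ k, 0 < A k := fun k => lt_of_lt_of_le (by linarith [habs k]) (hδA k)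
  have hA0 : Tendsto A atTop (nhds 0) := by
    have h1 : Tendsto (fun k => (1:ℂ) - z k) atTop (nhds 0) := by
      have := Tendsto.const_sub (1:ℂ) hlim; simpa using this
    have := (Complex.continuous_abs.tendsto 0).comp h1
    simpa [Function.comp_def, hA] using this
  have hfabs : ∀ k, Complex.abs (f (z k)) < 1 := fun k => mem_ball_iff_abs.mp (hm (hz k))
  -- f(z k) → 1
  have hf1 : Tendsto (fun k => f (z k)) atTop (nhds 1) := by
    rw [tendsto_iff_dist_tendsto_zero]
    apply squeeze_zero (fun k => dist_nonneg) (g := fun k => ε k * A k ^ 3 + A k)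
    · intro k
      rw [Complex.dist_eq]
      calc Complex.abs (f (z k) - 1)
          = Complex.abs ((f (z k) - z k) + (z k - 1)) := by ring_nf
        _ ≤ Complex.abs (f (z k) - z k) + Complex.abs (z k - 1) := Complex.abs.add_le _ _
        _ ≤ ε k * A k ^ 3 + A k := by
            have h2 : Complex.abs (z k - 1) = A k := Complex.abs.map_sub _ _
            have := hbd k
            rw [h2]; exact add_le_add this le_rfl
    · have := ((hε.mul ((hA0.pow 3))).add hA0)
      simpa using this
  -- the ratio tends to 1
  have hratio : Tendsto (fun k => (1 - normSq (f (z k))) / (1 - normSq (z k)))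
      atTop (nhds 1) := by
    rw [tendsto_iff_dist_tendsto_zero]
    apply squeeze_zero (fun k => dist_nonneg) (g := fun k => 2 * C^3 * ε k)
    · intro k
      set a := Complex.abs (z k) with ha
      set b := Complex.abs (f (z k)) with hb
      have hNSz : normSq (z k) = a ^ 2 := by rw [ha, ← Complex.sq_abs]
      have hNSfz : normSq (f (z k)) = b ^ 2 := by rw [hb, ← Complex.sq_abs]
      have ha1 : a < 1 := habs k
      have ha0 : 0 ≤ a := habsnn k
      have hb1 : b < 1 := hfabs k
      have hb0 : 0 ≤ b := Complex.abs.nonneg _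
      have hpos : 0 < 1 - a ^ 2 := by nlinarith
      have hab : |a - b| ≤ ε k * A k ^ 3 := by
        have h1 : |a - b| ≤ Complex.abs (z k - f (z k)) :=
          Complex.abs.abs_abv_sub_le_abv_sub _ _
        have h2 : Complex.abs (z k - f (z k)) = Complex.abs (f (z k) - z k) :=
          Complex.abs.map_sub _ _
        rw [h2] at h1
        exact h1.trans (hbd k)
      have hA3 : A k ^ 3 ≤ C^3 * (1 - a)^3 := by
        have := pow_le_pow_left₀ (hAnn k) (hnt k) 3
        calc A k ^3 ≤ (C * (1-a))^3 := this
          _ = C^3 * (1-a)^3 := by ring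
      rw [Real.dist_eq, hNSz, hNSfz]
      rw [show (1 - b^2)/(1-a^2) - 1 = ((1-b^2) - (1-a^2))/(1-a^2) from by
        field_simp]
      rw [abs_div, abs_of_pos hpos, div_le_iff₀ hpos]
      have h3 : |1 - b^2 - (1-a^2)| ≤ 2 * (ε k * A k ^3) := by
        rw [abs_le]
        constructor <;> nlinarith [abs_le.mp hab, ha1, ha0, hb1, hb0, hεnn k, hApos k]
      have h4 : 2 * (ε k * A k^3) ≤ 2*C^3*ε k * (1 - a^2) := by
        have h5 : (1-a)^3 ≤ (1-a) := by nlinarith [mul_nonneg (mul_nonneg (by linarith : (0:ℝ) ≤ 1-a) ha0) (by linarith : (0:ℝ) ≤ 2-a)]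
        have h6 : (1 - a) ≤ 1 - a^2 := by nlinarith
        have h7 : A k ^ 3 ≤ C^3 * (1 - a^2) := by nlinarith [hA3, h5, h6, pow_pos hC 3]
        nlinarith [mul_le_mul_of_nonneg_left h7 (hεnn k)]
      linarith
    · have : Tendsto (fun k => 2*C^3 * ε k) atTop (nhds (2*C^3*0)) :=
        hε.const_mul _
      simpa using this
  -- Julia inequality with α = 1
  have hjulia1 : ∀ w ∈ ball (0:ℂ) 1,
      normSq (1 - f w) * (1 - normSq w) ≤ normSq (1 - w) * (1 - normSq (f w)) := by
    intro w hw
    have := julia hd hm z hz hlim hf1 hratio hw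
    linarith
  -- the function q
  set q : ℂ → ℂ := fun w => (1 + f w)/(1 - f w) - (1 + w)/(1 - w) with hqdef
  have h1w : ∀ w ∈ ball (0:ℂ) 1, (1:ℂ) - w ≠ 0 := fun w hw =>
    one_sub_ne (mem_ball_iff_abs.mp hw)
  have h1fw : ∀ w ∈ ball (0:ℂ) 1, (1:ℂ) - f w ≠ 0 := fun w hw =>
    one_sub_ne (mem_ball_iff_abs.mp (hm hw))
  have hqre : ∀ w ∈ ball (0:ℂ) 1, 0 ≤ (q w).re := by
    intro w hw
    have e1 : (q w).re = (1 - normSq (f w))/normSq (1 - f w) - (1 - normSq w)/normSq (1-w) := by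
      rw [hqdef]
      simp only [Complex.sub_re]
      rw [re_quot (mem_ball_iff_abs.mp (hm hw)), re_quot (mem_ball_iff_abs.mp hw)]
    rw [e1, sub_nonneg, div_le_div_iff₀ (normSq_pos.mpr (h1w w hw)) (normSq_pos.mpr (h1fw w hw))]
    have := hjulia1 w hw
    linarith
  have hqdiff : DifferentiableOn ℂ q (ball (0:ℂ) 1) := by
    apply DifferentiableOn.sub
    · exact DifferentiableOn.div ((differentiableOn_const _).add hd)
        ((differentiableOn_const _).sub hd) h1fw
    · exact DifferentiableOn.div ((differentiableOn_const _).add differentiableOn_id)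
        ((differentiableOn_const _).sub differentiableOn_id) h1w
  -- eventual bound on |q (z k)|
  have hqb : ∀ᶠ k in atTop, Complex.abs (q (z k)) ≤ 4 * (ε k * A k) := by
    have hsmall : ∀ᶠ k in atTop, ε k * A k ^ 2 ≤ 1/2 := by
      have h0 : Tendsto (fun k => ε k * A k ^ 2) atTop (nhds 0) := by
        have := hε.mul (hA0.pow 2); simpa using this
      exact h0.eventually (eventually_le_nhds one_half_pos)
    filter_upwards [hsmall] with k hk
    have hApk := hApos k
    have hden : A k / 2 ≤ Complex.abs (1 - f (z k)) := by
      have h1 : A k ≤ Complex.abs (1 - f (z k)) + Complex.abs (f (z k) - z k) := by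
        have := Complex.abs.add_le (1 - f (z k)) (f (z k) - z k)
        calc A k = Complex.abs ((1 - f (z k)) + (f (z k) - z k)) := by ring_nf; rfl
          _ ≤ _ := this
      have h2 : Complex.abs (f (z k) - z k) ≤ A k / 2 := by
        calc Complex.abs (f (z k) - z k) ≤ ε k * A k ^ 3 := hbd k
          _ = (ε k * A k ^2) * A k := by ring
          _ ≤ (1/2) * A k := by nlinarith [hApk]
          _ = A k / 2 := by ring
      linarith
    have hq_eq : q (z k) = 2*(f (z k) - z k)/((1 - f (z k))*(1 - z k)) := by
      rw [hqdef]
      field_simp [h1fw _ (hz k), h1w _ (hz k)]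
      ring
    have habsq : Complex.abs (q (z k))
        = 2 * Complex.abs (f (z k) - z k) / (Complex.abs (1 - f (z k)) * A k) := by
      rw [hq_eq, map_div₀, map_mul, map_mul]
      norm_num [show Complex.abs 2 = 2 from by simp [Complex.abs_apply], hA]
    rw [habsq]
    have hdenpos : 0 < Complex.abs (1 - f (z k)) * A k := by
      have := h1fw _ (hz k)
      have h5 : 0 < Complex.abs (1 - f (z k)) := by
        rwa [AbsoluteValue.pos_iff]
      exact mul_pos h5 hApk
    rw [div_le_iff₀ hdenpos]
    have := hbd k
    nlinarith [hεnn k, hApk, mul_le_mul_of_nonneg_left hden (mul_nonneg (mul_nonneg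
      (by norm_num : (0:ℝ) ≤ 4) (hεnn k)) hApk.le)]
  have hq0 : Tendsto (fun k => q (z k)) atTop (nhds 0) := by
    rw [tendsto_zero_iff_norm_tendsto_zero]
    have hb' : ∀ᶠ k in atTop, ‖q (z k)‖ ≤ 4 * (ε k * A k) := by
      filter_upwards [hqb] with k hk
      simpa [Complex.norm_eq_abs] using hk
    exact squeeze_zero' (Eventually.of_forall fun k => norm_nonneg _) hb'
      (by simpa using (hε.mul hA0).const_mul (4:ℝ))
  -- strict positivity of Re q everywhere is impossible
  have hnotpos : ¬ (∀ w ∈ ball (0:ℂ) 1, 0 < (q w).re) := by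
    intro hpos
    set Q : ℂ → ℂ := fun w => -((q w - 1)/(q w + 1)) with hQdef
    have hQden : ∀ w ∈ ball (0:ℂ) 1, q w + 1 ≠ 0 := by
      intro w hw h
      have : (q w + 1).re = 0 := by rw [h]; simp
      simp only [Complex.add_re, Complex.one_re] at this
      linarith [hpos w hw]
    have hQns : ∀ w ∈ ball (0:ℂ) 1, normSq (Q w) = normSq (q w - 1) / normSq (q w + 1) := by
      intro w hw
      rw [hQdef]
      simp only [normSq_neg]
      exact map_div₀ normSq _ _
    have hQnspos : ∀ w ∈ ball (0:ℂ) 1, 0 < normSq (q w + 1) := fun w hw =>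
      normSq_pos.mpr (hQden w hw)
    have hQone : ∀ w ∈ ball (0:ℂ) 1, 1 ≤ normSq (q w + 1) := by
      intro w hw
      rw [normSq_apply]
      simp only [Complex.add_re, Complex.add_im, Complex.one_re, Complex.one_im]
      nlinarith [hpos w hw, sq_nonneg (q w).im]
    have hQmaps : Set.MapsTo Q (ball (0:ℂ) 1) (ball (0:ℂ) 1) := by
      intro w hw
      rw [mem_ball_iff_abs]
      apply abs_lt_one_of_normSq
      rw [hQns w hw, div_lt_one (hQnspos w hw)]
      have := quad_key (q w)
      linarith [hpos w hw]
    have hQdiff : DifferentiableOn ℂ Q (ball (0:ℂ) 1) := by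
      rw [hQdef]
      exact (DifferentiableOn.div (hqdiff.sub (differentiableOn_const _))
        (hqdiff.add (differentiableOn_const _)) hQden).neg
    have hQ1 : Tendsto (fun k => Q (z k)) atTop (nhds 1) := by
      have h1 : Tendsto (fun k => (q (z k) - 1)/(q (z k) + 1)) atTop (nhds (-1)) := by
        have := Tendsto.div (hq0.sub_const 1) (hq0.add_const 1) (by norm_num)
        simpa [Pi.div_def] using this
      have := h1.neg
      simpa using this
    have hQratio : Tendsto (fun k => (1 - normSq (Q (z k))) / (1 - normSq (z k)))
        atTop (nhds 0) := by
      have hupper : ∀ᶠ k in atTop, (1 - normSq (Q (z k))) / (1 - normSq (z k)) ≤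
          16 * C * ε k := by
        filter_upwards [hqb] with k hk
        have hzpos : 0 < 1 - normSq (z k) := by
          have := normSq_lt_one (habs k); linarith
        rw [div_le_iff₀ hzpos]
        have h1 : 1 - normSq (Q (z k)) ≤ 4 * (q (z k)).re := by
          rw [hQns _ (hz k), one_sub_div (hQnspos _ (hz k)).ne']
          rw [show normSq (q (z k) + 1) - normSq (q (z k) - 1) = 4 * (q (z k)).re from
            quad_key _]
          exact div_le_self (by linarith [hpos _ (hz k)]) (hQone _ (hz k))
        have h2 : (q (z k)).re ≤ Complex.abs (q (z k)) := Complex.re_le_abs _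
        have h3 : A k ≤ C * (1 - Complex.abs (z k)) := hnt k
        have h4 : 1 - Complex.abs (z k) ≤ 1 - normSq (z k) := by
          rw [← Complex.sq_abs]
          nlinarith [habsnn k, habs k]
        have h5 : Complex.abs (q (z k)) ≤ 4 * (ε k * (C * (1 - normSq (z k)))) := by
          calc Complex.abs (q (z k)) ≤ 4 * (ε k * A k) := hk
            _ ≤ 4 * (ε k * (C * (1 - normSq (z k)))) := by
                nlinarith [hεnn k, mul_le_mul_of_nonneg_left (h3.trans
                  (by nlinarith [h4, hC] : C * (1 - Complex.abs (z k)) ≤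
                    C * (1 - normSq (z k)))) (hεnn k)]
        nlinarith [h1, h2, h5]
      have hlower : ∀ᶠ k in atTop, 0 ≤ (1 - normSq (Q (z k))) / (1 - normSq (z k)) := by
        apply Eventually.of_forall
        intro k
        apply div_nonneg
        · have := normSq_lt_one (mem_ball_iff_abs.mp (hQmaps (hz k))); linarith
        · have := normSq_lt_one (habs k); linarith
      have h16 : Tendsto (fun k => 16 * C * ε k) atTop (nhds 0) := by
        have := hε.const_mul (16*C); simpa using this
      exact squeeze_zero' hlower hupper h16
    have h0ball : (0:ℂ) ∈ ball (0:ℂ) 1 := mem_ball_self one_pos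
    have hj := julia hQdiff hQmaps z hz hlim hQ1 hQratio h0ball
    simp only [zero_mul] at hj
    have hns0 : normSq (1 - Q 0) * (1 - normSq (0:ℂ)) ≤ 0 := hj
    have h1 : normSq (1 - Q 0) = 0 := by
      have := normSq_nonneg (1 - Q 0)
      simp only [map_zero] at hns0
      nlinarith
    have hQ0 : Q 0 = 1 := by
      have := normSq_eq_zero.mp h1
      have : (1:ℂ) = Q 0 := by linear_combination this
      exact this.symm
    rw [hQdef] at hQ0
    have hden0 := hQden 0 h0ball
    have : -(q 0 - 1) = q 0 + 1 := by
      field_simp at hQ0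
      linear_combination hQ0
    obtain ⟨x, hx⟩ : ∃ x, q 0 = x := ⟨_, rfl⟩
    rw [hx] at this
    have hq00 : q 0 = 0 := by rw [hx]; linear_combination -this / 2
    have := hpos 0 h0ball
    rw [hq00] at this
    simp at this
  -- open mapping dichotomy: q must be constant, hence 0
  have hqzero : ∀ w ∈ ball (0:ℂ) 1, q w = 0 := by
    rcases (hqdiff.analyticOnNhd isOpen_ball).is_constant_or_isOpen
        (convex_ball (0:ℂ) 1).isPreconnected with ⟨c, hc⟩ | hopen
    · have hc0 : c = 0 := by
        have h1 : Tendsto (fun k => q (z k)) atTop (nhds c) := by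
          have : (fun k => q (z k)) = fun _ => c := funext fun k => hc _ (hz k)
          rw [this]; exact tendsto_const_nhds
        exact (tendsto_nhds_unique h1 hq0)
      intro w hw; rw [hc w hw, hc0]
    · exfalso
      apply hnotpos
      intro w hw
      rcases lt_or_eq_of_le (hqre w hw) with h | h
      · exact h
      · exfalso
        have himg : IsOpen (q '' ball (0:ℂ) 1) := hopen _ subset_rfl isOpen_ball
        obtain ⟨r, hr, hball⟩ := (Metric.isOpen_iff.mp himg) (q w) ⟨w, hw, rfl⟩
        have hmem : q w - Complex.ofReal (r/2) ∈ q '' ball (0:ℂ) 1 := by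
          apply hball
          rw [mem_ball, Complex.abs_dist_eq]
          have he : q w - Complex.ofReal (r/2) - q w = -Complex.ofReal (r/2) := by ring
          rw [he]
          have habs2 : Complex.abs (-Complex.ofReal (r/2)) = r/2 := by
            rw [AbsoluteValue.map_neg, Complex.abs_ofReal]
            exact abs_of_nonneg (by linarith)
          rw [habs2]; linarith
        obtain ⟨w', hw', hww'⟩ := hmem
        have : (q w').re = -(r/2) := by
          rw [hww']
          simp only [Complex.sub_re, Complex.ofReal_re, ← h]
          ring
        linarith [hqre w' hw', hr]
  -- conclude f = id
  intro w hw
  have hq := hqzero w hw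
  rw [hqdef] at hq
  have h2 : (1 + f w)/(1 - f w) = (1 + w)/(1 - w) := by
    have := sub_eq_zero.mp hq
    exact this
  rw [div_eq_div_iff (h1fw w hw) (h1w w hw)] at h2
  linear_combination h2 / 2

end BKProof

open BKProof Complex in
/-- First step of the proof of Proposition 7.1: if `π` is a holomorphic retraction of
`Ω` onto the disc along the stationary disc `Φ` (i.e. `π ∘ Φ = id`), and `Φ̃ : Δ → Ω`
is holomorphic with `Φ̃ z_k = Φ z_k + o(|z_k - 1|³)` along a nontangential sequence
`z_k → 1`, then `π ∘ Φ̃` is the identity on the disc. -/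
theorem retraction_step (N : ℕ)
    (Ω : Set (Fin N → ℂ)) (hΩopen : IsOpen Ω) (hΩbdd : Bornology.IsBounded Ω)
    (π : (Fin N → ℂ) → ℂ)
    (hπhol : DifferentiableOn ℂ π Ω)
    (hπlip : ∃ K : NNReal, LipschitzOnWith K π Ω)
    (hπmap : Set.MapsTo π Ω (ball (0 : ℂ) 1))
    (Φ : ℂ → (Fin N → ℂ))
    (hΦhol : DifferentiableOn ℂ Φ (ball (0 : ℂ) 1))
    (hΦmap : Set.MapsTo Φ (ball (0 : ℂ) 1) Ω)
    (hretr : ∀ ζ ∈ ball (0 : ℂ) 1, π (Φ ζ) = ζ)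
    (Φt : ℂ → (Fin N → ℂ))
    (hΦthol : DifferentiableOn ℂ Φt (ball (0 : ℂ) 1))
    (hΦtmap : Set.MapsTo Φt (ball (0 : ℂ) 1) Ω)
    (z : ℕ → ℂ) (hz : ∀ k, z k ∈ ball (0 : ℂ) 1)
    (hlim : Tendsto z atTop (nhds 1))
    (hnontan : ∃ C > 0, ∀ k, ‖1 - z k‖ ≤ C * (1 - ‖z k‖))
    (hasym : Tendsto (fun k => (‖z k - 1‖ ^ 3)⁻¹ • (Φt (z k) - Φ (z k)))
      atTop (nhds 0)) :
    ∀ ζ ∈ ball (0 : ℂ) 1, π (Φt ζ) = ζ := by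
  obtain ⟨K, hπK⟩ := hπlip
  obtain ⟨C, hC, hnt⟩ := hnontan
  have hfd : DifferentiableOn ℂ (fun ζ => π (Φt ζ)) (ball (0:ℂ) 1) :=
    hπhol.comp hΦthol hΦtmap
  have hfm : Set.MapsTo (fun ζ => π (Φt ζ)) (ball (0:ℂ) 1) (ball (0:ℂ) 1) :=
    fun ζ hζ => hπmap (hΦtmap hζ)
  set v : ℕ → (Fin N → ℂ) := fun k => (Complex.abs (z k - 1) ^ 3)⁻¹ • (Φt (z k) - Φ (z k))
    with hvdef
  have hε : Tendsto (fun k => (K:ℝ) * ‖v k‖) atTop (nhds 0) := by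
    have h1 : Tendsto (fun k => ‖v k‖) atTop (nhds 0) :=
      tendsto_zero_iff_norm_tendsto_zero.mp hasym
    have := h1.const_mul (K:ℝ)
    simpa using this
  have hεnn : ∀ k, 0 ≤ (K:ℝ) * ‖v k‖ := fun k => mul_nonneg K.2 (norm_nonneg _)
  have hbd : ∀ k, Complex.abs (π (Φt (z k)) - z k) ≤
      ((K:ℝ) * ‖v k‖) * Complex.abs (1 - z k) ^ 3 := by
    intro k
    have hzk := hz k
    have hzne : z k - 1 ≠ 0 := by
      intro h
      have h1 : z k = 1 := by linear_combination h
      have h2 := mem_ball_iff_abs.mp hzk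
      rw [h1] at h2
      simp at h2
    have hcne : (Complex.abs (z k - 1) ^ 3 : ℝ) ≠ 0 :=
      pow_ne_zero 3 ((AbsoluteValue.pos_iff Complex.abs).mpr hzne).ne'
    have h1 : Φt (z k) - Φ (z k) = (Complex.abs (z k - 1) ^ 3 : ℝ) • v k := by
      rw [hvdef]
      exact (smul_inv_smul₀ hcne _).symm
    have h2 : Complex.abs (π (Φt (z k)) - z k) = dist (π (Φt (z k))) (π (Φ (z k))) := by
      rw [Complex.abs_dist_eq, hretr (z k) hzk]
    rw [h2]
    calc dist (π (Φt (z k))) (π (Φ (z k)))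
        ≤ (K:ℝ) * dist (Φt (z k)) (Φ (z k)) :=
          hπK.dist_le_mul _ (hΦtmap hzk) _ (hΦmap hzk)
      _ = (K:ℝ) * (Complex.abs (z k - 1) ^ 3 * ‖v k‖) := by
          rw [dist_eq_norm, h1, norm_smul, Real.norm_eq_abs,
            _root_.abs_of_nonneg (show (0:ℝ) ≤ Complex.abs (z k - 1) ^ 3 by positivity)]
      _ = ((K:ℝ) * ‖v k‖) * Complex.abs (1 - z k) ^ 3 := by
          rw [Complex.abs.map_sub]
          ring
  exact burns_krantz hfd hfm z hz hlim hC hnt _ hεnn hε hbd
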